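/- Let B ≥ 0 be a random variable with esssup B < +∞, and let ũ : (−esssup B, +∞) → ℝ be a non-decreasing, continuous function with finite limit at −esssup B, satisfying: (ii) there exist real numbers γ̄ > 0, x̃ > 0 and C ≥ 0 such that ũ(λx) ≤ λ^γ̄ ũ(x) + λ^γ̄ C for all λ ≥ 1 and all x ≥ x̃; and (iii) ũ is continuously differentiable on its domain and there exist K > 0 and x̂ > 0 such that ũ'(x) ≤ K for all x ≥ x̂. Then the random utility u(x,ω) := ũ(x − B(ω)) satisfies Assumption (GR) with exponent γ̄, threshold x̄ := max{x̃,x̂} + esssup B, and constant c := K·esssup B + C; in particular, for a.e. ω, u(λx,ω) ≤ λ^γ̄ u(x,ω) + λ^γ̄ c for all λ ≥ 1 and x ≥ x̄, and E[u⁺(x̄,·)] < ∞. -/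
import Mathlib


open MeasureTheory Filter Set
open scoped ENNReal

/-- **Reference-point utilities satisfy Assumption (GR).**  Let `B ≥ 0` be a random variable with
essential supremum `M < ∞`, and let `ut` be a non-decreasing, continuously differentiable function
on `(-M, ∞)` with a finite limit at `-M`, satisfying the growth condition (ii) and the bounded
derivative condition (iii).  Then the random utility `u(x,ω) := ut (x - B ω)` satisfies Assumption
(GR) with exponent `γbar`, threshold `x̄ := max xt xh + M` and constant `c := K * M + C`;
moreover `E[u⁺(x̄,·)] < ∞`. -/
theorem reference_point_utility_satisfies_GR
    {Ω : Type*} {mΩ : MeasurableSpace Ω} (μ : Measure Ω) [IsProbabilityMeasure μ]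
    (B : Ω → ℝ) (hB_meas : Measurable B) (hB_nonneg : ∀ᵐ ω ∂μ, 0 ≤ B ω)
    -- `M` is the (finite) essential supremum of `B`:
    (M : ℝ) (hM_bound : ∀ᵐ ω ∂μ, B ω ≤ M)
    (hM_least : ∀ M' : ℝ, (∀ᵐ ω ∂μ, B ω ≤ M') → M ≤ M')
    (ut ut' : ℝ → ℝ)
    (hmono : MonotoneOn ut (Set.Ioi (-M)))
    -- finite limit at `-M`:
    (hlim : ∃ l : ℝ, Tendsto ut (nhdsWithin (-M) (Set.Ioi (-M))) (nhds l))
    -- `ut` is continuously differentiable on its domain: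
    (hderiv : ∀ x ∈ Set.Ioi (-M), HasDerivAt ut (ut' x) x)
    (hcont' : ContinuousOn ut' (Set.Ioi (-M)))
    -- condition (ii):
    (γbar xt C : ℝ) (hγbar : 0 < γbar) (hxt : 0 < xt) (hC : 0 ≤ C)
    (hii : ∀ lam : ℝ, 1 ≤ lam → ∀ x : ℝ, xt ≤ x →
      ut (lam * x) ≤ lam ^ γbar * ut x + lam ^ γbar * C)
    -- condition (iii):
    (K xh : ℝ) (hK : 0 < K) (hxh : 0 < xh)
    (hiii : ∀ x : ℝ, xh ≤ x → ut' x ≤ K) :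
    (∀ᵐ ω ∂μ, ∀ lam : ℝ, 1 ≤ lam → ∀ x : ℝ, max xt xh + M ≤ x →
      ut (lam * x - B ω) ≤ lam ^ γbar * ut (x - B ω) + lam ^ γbar * (K * M + C)) ∧
    (∫⁻ ω, ENNReal.ofReal (ut (max xt xh + M - B ω)) ∂μ) < ⊤ := by

  have hMnn : 0 ≤ M := by
    obtain ⟨ω, h0, hM⟩ := (hB_nonneg.and hM_bound).exists
    linarith
  -- Mean value estimate: for `xh ≤ a ≤ b`, `ut b ≤ ut a + K * (b - a)`.
  have hmvt : ∀ a b : ℝ, xh ≤ a → a ≤ b → ut b ≤ ut a + K * (b - a) := by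
    intro a b ha hab
    have hsub : Set.Icc a b ⊆ Set.Ioi (-M) := by
      intro y hy
      have : xh ≤ y := le_trans ha hy.1
      simp only [Set.mem_Ioi]
      linarith
    have hg : MonotoneOn (fun y => K * y - ut y) (Set.Icc a b) := by
      apply monotoneOn_of_deriv_nonneg (convex_Icc a b)
      · apply ContinuousOn.sub (by fun_prop)
        intro y hy
        exact (hderiv y (hsub hy)).continuousAt.continuousWithinAt
      · intro y hy
        rw [interior_Icc] at hy
        exact (((hasDerivAt_id y).const_mul K).sub
          (hderiv y (hsub (Set.mem_Icc_of_Ioo hy)))).differentiableAt.differentiableWithinAt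
      · intro y hy
        rw [interior_Icc] at hy
        have hd : deriv (fun y => K * y - ut y) y = K * 1 - ut' y :=
          (((hasDerivAt_id y).const_mul K).sub
            (hderiv y (hsub (Set.mem_Icc_of_Ioo hy)))).deriv
        rw [hd]
        have := hiii y (by linarith [hy.1])
        linarith
    have := hg (Set.left_mem_Icc.2 hab) (Set.right_mem_Icc.2 hab) hab
    simp only at this
    linarith
  constructor
  · filter_upwards [hB_nonneg, hM_bound] with ω hb0 hbM
    intro lam hlam x hx
    set b := B ω with hb
    have hxtle : xt ≤ max xt xh := le_max_left _ _
    have hxhle : xh ≤ max xt xh := le_max_right _ _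
    have hxb : max xt xh ≤ x - b := by linarith
    have hxbpos : 0 < x - b := by linarith
    have hpow : 0 < lam ^ γbar := Real.rpow_pos_of_pos (by linarith) _
    have step1 : ut (lam * x - b) ≤ ut (lam * (x - b + M)) := by
      apply hmono
      · simp only [Set.mem_Ioi]
        nlinarith
      · simp only [Set.mem_Ioi]
        nlinarith
      · nlinarith
    have step2 : ut (lam * (x - b + M)) ≤ lam ^ γbar * ut (x - b + M) + lam ^ γbar * C :=
      hii lam hlam _ (by linarith)
    have step3 : ut (x - b + M) ≤ ut (x - b) + K * M := by
      have := hmvt (x - b) (x - b + M) (by linarith) (by linarith)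
      linarith
    nlinarith [mul_le_mul_of_nonneg_left step3 hpow.le]
  · have hx0 : -M < max xt xh + M - M := by
      have : 0 < max xt xh := lt_of_lt_of_le hxt (le_max_left _ _)
      linarith
    have hbd : ∀ᵐ ω ∂μ, ENNReal.ofReal (ut (max xt xh + M - B ω)) ≤
        ENNReal.ofReal (ut (max xt xh + M)) := by
      filter_upwards [hB_nonneg, hM_bound] with ω hb0 hbM
      apply ENNReal.ofReal_le_ofReal
      apply hmono
      · simp only [Set.mem_Ioi]; linarith
      · simp only [Set.mem_Ioi]; linarith
      · linarith
    calc (∫⁻ ω, ENNReal.ofReal (ut (max xt xh + M - B ω)) ∂μ)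
        ≤ ∫⁻ _, ENNReal.ofReal (ut (max xt xh + M)) ∂μ := lintegral_mono_ae hbd
      _ < ⊤ := by
          rw [lintegral_const]
          exact ENNReal.mul_lt_top ENNReal.ofReal_lt_top (measure_lt_top μ _)
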